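/- For every real x ≥ 0, the contraction factor satisfies C(x) = 4(φ(x)² + x·φ(x)·(2Φ(x)−1) − x²·Φ(x)·(1−Φ(x))) ≤ 2/π, with equality at x = 0 (i.e., C(0) = 4·φ(0)² = 2/π < 1). -/

import Mathlib

/-- The standard normal density `φ`. -/
noncomputable def stdGauss (t : ℝ) : ℝ :=
  (Real.sqrt (2 * Real.pi))⁻¹ * Real.exp (-t ^ 2 / 2)

/-- The standard normal CDF `Φ`. -/
noncomputable def stdCDF (t : ℝ) : ℝ := ∫ s in Set.Iic t, stdGauss s

/-- The contraction factor `C(x)`. -/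
noncomputable def contractionC (x : ℝ) : ℝ :=
  4 * (stdGauss x ^ 2 + x * stdGauss x * (2 * stdCDF x - 1) -
    x ^ 2 * stdCDF x * (1 - stdCDF x))

open Real MeasureTheory Set Filter

lemma stdGauss_nonneg (t : ℝ) : 0 ≤ stdGauss t := by
  unfold stdGauss; positivity

lemma stdGauss_cont : Continuous stdGauss := by
  unfold stdGauss
  continuity

lemma stdGauss_integrable : Integrable stdGauss := by
  have h : Integrable (fun t : ℝ => Real.exp (-(2⁻¹ : ℝ) * t ^ 2)) :=
    integrable_exp_neg_mul_sq (by norm_num)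
  have := h.const_mul (Real.sqrt (2 * Real.pi))⁻¹
  refine this.congr (Eventually.of_forall fun t => ?_)
  unfold stdGauss; ring_nf

lemma stdGauss_integral : ∫ t : ℝ, stdGauss t = 1 := by
  have h := integral_gaussian (2⁻¹ : ℝ)
  have h2 : ∫ t : ℝ, stdGauss t
      = (Real.sqrt (2 * Real.pi))⁻¹ * ∫ t : ℝ, Real.exp (-(2⁻¹:ℝ) * t ^ 2) := by
    rw [← integral_const_mul]
    congr 1; ext t; unfold stdGauss; ring_nf
  rw [h2, h]
  rw [show Real.pi / (2⁻¹ : ℝ) = 2 * Real.pi by ring]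
  rw [inv_mul_cancel₀]
  positivity

lemma one_sub_stdCDF (x : ℝ) : 1 - stdCDF x = ∫ s in Set.Ioi x, stdGauss s := by
  have h := intervalIntegral.integral_Iic_add_Ioi (b := x) (f := stdGauss)
    stdGauss_integrable.integrableOn stdGauss_integrable.integrableOn
  rw [stdGauss_integral] at h
  unfold stdCDF; linarith

lemma stdCDF_nonneg (x : ℝ) : 0 ≤ stdCDF x := by
  unfold stdCDF
  exact integral_nonneg fun t => stdGauss_nonneg t

lemma stdCDF_le_one (x : ℝ) : stdCDF x ≤ 1 := by
  have h := one_sub_stdCDF x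
  have : 0 ≤ ∫ s in Set.Ioi x, stdGauss s := integral_nonneg fun t => stdGauss_nonneg t
  linarith

lemma stdCDF_zero : stdCDF 0 = 1/2 := by
  have heven : ∀ t : ℝ, stdGauss (-t) = stdGauss t := by
    intro t; unfold stdGauss; rw [neg_pow]; ring_nf
  have h1 : stdCDF 0 = ∫ s in Set.Ioi (0:ℝ), stdGauss s := by
    unfold stdCDF
    rw [show (0:ℝ) = -0 by norm_num, ← integral_comp_neg_Iic]
    simp only [heven, neg_zero]
  have h2 := one_sub_stdCDF 0
  linarith

lemma hasDerivAt_stdCDF (x : ℝ) : HasDerivAt stdCDF (stdGauss x) x := by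
  have key : ∀ y : ℝ, stdCDF y = stdCDF 0 + ∫ s in (0:ℝ)..y, stdGauss s := by
    intro y
    have := intervalIntegral.integral_Iic_sub_Iic (μ := volume) (f := stdGauss) (a := (0:ℝ)) (b := y)
      stdGauss_integrable.integrableOn stdGauss_integrable.integrableOn
    unfold stdCDF; linarith
  have hderiv : HasDerivAt (fun y => stdCDF 0 + ∫ s in (0:ℝ)..y, stdGauss s) (stdGauss x) x := by
    apply HasDerivAt.const_add
    apply intervalIntegral.integral_hasDerivAt_right
    · exact stdGauss_integrable.intervalIntegrable
    · exact stdGauss_cont.aestronglyMeasurable.stronglyMeasurableAtFilter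
    · exact stdGauss_cont.continuousAt
  exact hderiv.congr_deriv rfl |>.congr_of_eventuallyEq (Eventually.of_forall fun y => (key y)) |>.congr_deriv rfl

lemma hasDerivAt_stdGauss (x : ℝ) : HasDerivAt stdGauss (-x * stdGauss x) x := by
  have h1 : HasDerivAt (fun t : ℝ => -t ^ 2 / 2) (-x) x := by
    have := ((hasDerivAt_pow 2 x).neg).div_const 2
    simpa using this.congr_deriv (by ring)
  have h2 := (h1.exp).const_mul (Real.sqrt (2 * Real.pi))⁻¹
  unfold stdGauss
  refine h2.congr_deriv ?_
  ring

lemma stdGauss_le (x : ℝ) : stdGauss x ≤ stdGauss 0 := by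
  unfold stdGauss
  have : Real.exp (-x^2/2) ≤ Real.exp (-(0:ℝ)^2/2) :=
    Real.exp_le_exp.mpr (by nlinarith [sq_nonneg x])
  have h0 : (0:ℝ) ≤ (Real.sqrt (2 * Real.pi))⁻¹ := by positivity
  exact mul_le_mul_of_nonneg_left this h0

lemma stdGauss_tendsto : Tendsto stdGauss atTop (nhds 0) := by
  have h1 : Tendsto (fun t : ℝ => t ^ 2) atTop atTop := tendsto_pow_atTop two_ne_zero
  have h : Tendsto (fun t : ℝ => -t ^ 2 / 2) atTop atBot := by
    apply Tendsto.atBot_div_const (by norm_num : (0:ℝ) < 2)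
    exact tendsto_neg_atBot_iff.mpr h1
  have h2 := Real.tendsto_exp_atBot.comp h
  have h3 := h2.const_mul ((Real.sqrt (2 * Real.pi))⁻¹)
  rw [mul_zero] at h3
  exact h3.congr fun t => rfl

lemma stdCDF_sub_half_le {x : ℝ} (hx : 0 ≤ x) : stdCDF x - 1/2 ≤ x * stdGauss 0 := by
  have key := intervalIntegral.integral_Iic_sub_Iic (μ := volume) (f := stdGauss) (a := (0:ℝ))
    (b := x) stdGauss_integrable.integrableOn stdGauss_integrable.integrableOn
  have hb : ∫ s in (0:ℝ)..x, stdGauss s ≤ ∫ s in (0:ℝ)..x, stdGauss 0 := by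
    apply intervalIntegral.integral_mono_on hx stdGauss_integrable.intervalIntegrable
      intervalIntegrable_const
    intro s _; exact stdGauss_le s
  rw [intervalIntegral.integral_const, smul_eq_mul] at hb
  have h0 : stdCDF x - stdCDF 0 = ∫ s in (0:ℝ)..x, stdGauss s := key
  rw [stdCDF_zero] at h0
  simp at hb
  linarith

/-- Mills ratio lower bound: `x φ(x)/(x²+1) ≤ 1 - Φ(x)` for `x ≥ 0`. -/
lemma mills (x : ℝ) : x * stdGauss x / (x^2+1) ≤ 1 - stdCDF x := by
  set h : ℝ → ℝ := fun s => -(s * stdGauss s / (s^2+1)) with hh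
  set h' : ℝ → ℝ := fun s => -(stdGauss s * ((1 - 2*s^2 - s^4)/(s^2+1)^2)) with hh'
  have habs : ∀ s : ℝ, |h' s| ≤ stdGauss s := by
    intro s
    have hg := stdGauss_nonneg s
    have hd : (0:ℝ) < (s^2+1)^2 := by positivity
    rw [hh', abs_neg, abs_mul, abs_of_nonneg hg, abs_div, abs_of_pos hd]
    have h1 : |1 - 2*s^2 - s^4| ≤ (s^2+1)^2 := by
      rw [abs_le]; constructor <;> nlinarith [sq_nonneg s, sq_nonneg (s^2)]
    calc stdGauss s * (|1 - 2*s^2 - s^4| / (s^2+1)^2)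
        ≤ stdGauss s * 1 := by
          apply mul_le_mul_of_nonneg_left _ hg
          rw [div_le_one hd]; exact h1
      _ = stdGauss s := mul_one _
  have hderiv : ∀ s : ℝ, HasDerivAt h (h' s) s := by
    intro s
    have hden : (s:ℝ)^2 + 1 ≠ 0 := by positivity
    have hden2 : ((s:ℝ)^2+1)^2 ≠ 0 := by positivity
    have h1 : HasDerivAt (fun u : ℝ => u * stdGauss u)
        (1 * stdGauss s + s * (-s * stdGauss s)) s :=
      (hasDerivAt_id s).mul (hasDerivAt_stdGauss s)
    have h2 : HasDerivAt (fun u : ℝ => u^2 + 1) (2*s) s := by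
      simpa using (hasDerivAt_pow 2 s).add_const 1
    have h3 := (h1.div h2 hden).neg
    refine h3.congr_deriv ?_
    rw [hh', neg_inj, mul_div_assoc', div_eq_div_iff hden2 hden2]
    ring
  have htend : Tendsto h atTop (nhds 0) := by
    apply squeeze_zero_norm' _ stdGauss_tendsto
    filter_upwards [eventually_ge_atTop (0:ℝ)] with s hs
    have hg := stdGauss_nonneg s
    rw [hh, Real.norm_eq_abs, abs_neg, abs_of_nonneg (by positivity)]
    rw [div_le_iff₀ (by positivity)]
    nlinarith [sq_nonneg (s-1)]
  have hint : IntegrableOn h' (Ioi x) := by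
    apply Integrable.mono (stdGauss_integrable.restrict)
    · apply Continuous.aestronglyMeasurable
      rw [hh']
      apply Continuous.neg
      apply Continuous.mul stdGauss_cont
      apply Continuous.div (by continuity) (by continuity)
      intro s; positivity
    · filter_upwards with s
      rw [Real.norm_eq_abs, Real.norm_eq_abs, abs_of_nonneg (stdGauss_nonneg s)]
      exact habs s
  have hFTC : ∫ s in Ioi x, h' s = 0 - h x :=
    integral_Ioi_of_hasDerivAt_of_tendsto' (fun s _ => hderiv s) hint htend
  have hmono : ∫ s in Ioi x, h' s ≤ ∫ s in Ioi x, stdGauss s := by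
    apply setIntegral_mono_on hint stdGauss_integrable.integrableOn measurableSet_Ioi
    intro s _
    exact le_trans (le_abs_self _) (habs s)
  rw [hFTC] at hmono
  rw [← one_sub_stdCDF] at *
  simp only [hh] at hmono
  linarith

lemma stdGauss_zero_sq : stdGauss 0 ^ 2 = (2 * Real.pi)⁻¹ := by
  unfold stdGauss
  rw [show (-(0:ℝ)^2/2) = 0 by norm_num, Real.exp_zero, mul_one]
  rw [← Real.sqrt_inv, Real.sq_sqrt (by positivity)]

lemma stdCDF_half_le {x : ℝ} (hx : 0 ≤ x) : 1/2 ≤ stdCDF x := by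
  have hmono : Monotone stdCDF := by
    intro a b hab
    have : ∀ y, HasDerivAt stdCDF (stdGauss y) y := hasDerivAt_stdCDF
    exact (monotone_of_deriv_nonneg (fun y => (this y).differentiableAt)
      (fun y => by rw [(this y).deriv]; exact stdGauss_nonneg y)) hab
  calc (1:ℝ)/2 = stdCDF 0 := stdCDF_zero.symm
    _ ≤ stdCDF x := hmono hx

set_option maxHeartbeats 1000000 in
/-- Key inequality: `φ(x)·(Φ(x)-1/2) ≤ x·Φ(x)·(1-Φ(x))` for `x ≥ 0`. -/
lemma g_nonneg {x : ℝ} (hx : 0 ≤ x) :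
    stdGauss x * (stdCDF x - 1/2) ≤ x * (stdCDF x * (1 - stdCDF x)) := by
  set φ := stdGauss x with hφ
  set Φ := stdCDF x with hΦ
  set c := stdGauss 0 with hc
  have hφ0 : 0 ≤ φ := stdGauss_nonneg x
  have hΦ0 : 0 ≤ Φ := stdCDF_nonneg x
  have hΦ1 : Φ ≤ 1 := stdCDF_le_one x
  have ht0 : 0 ≤ Φ - 1/2 := by have := stdCDF_half_le hx; linarith
  have htc : Φ - 1/2 ≤ x * c := stdCDF_sub_half_le hx
  have hc0 : 0 ≤ c := stdGauss_nonneg 0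
  have hc2 : c ^ 2 = (2 * Real.pi)⁻¹ := stdGauss_zero_sq
  have hpi := Real.pi_gt_d6
  have hpi0 := Real.pi_pos
  clear_value φ Φ c
  rcases le_or_gt x (17/20) with hcase | hcase
  · -- small x : use t ≤ cx and φ ≤ c/(1+x²/2)
    have hexp : Real.exp (-x^2/2) * (1 + x^2/2) ≤ 1 := by
      have h1 : 1 + x^2/2 ≤ Real.exp (x^2/2) := by
        have := Real.add_one_le_exp (x^2/2); linarith
      calc Real.exp (-x^2/2) * (1 + x^2/2) ≤ Real.exp (-x^2/2) * Real.exp (x^2/2) :=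
            mul_le_mul_of_nonneg_left h1 (Real.exp_nonneg _)
        _ = 1 := by rw [← Real.exp_add, show -x^2/2 + x^2/2 = 0 by ring, Real.exp_zero]
    have hφc : φ * (1 + x^2/2) ≤ c := by
      have hce : φ = c * Real.exp (-x^2/2) := by
        rw [hφ, hc]; unfold stdGauss; norm_num
      calc φ * (1 + x^2/2) = c * (Real.exp (-x^2/2) * (1 + x^2/2)) := by rw [hce]; ring
        _ ≤ c * 1 := mul_le_mul_of_nonneg_left hexp hc0
        _ = c := mul_one c
    -- LHS ≤ φ * c * x ≤ c²x/(1+x²/2) ; RHS ≥ x(1/4 - c²x²)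
    have hL : φ * (Φ - 1/2) ≤ c^2 * x / (1 + x^2/2) := by
      have h1 : φ * (Φ - 1/2) ≤ φ * (x * c) := mul_le_mul_of_nonneg_left htc hφ0
      have h2 : φ ≤ c / (1 + x^2/2) := by
        rw [le_div_iff₀ (by positivity)]; exact hφc
      have h3 : φ * (x * c) ≤ (c / (1 + x^2/2)) * (x * c) :=
        mul_le_mul_of_nonneg_right h2 (by positivity)
      calc φ * (Φ - 1/2) ≤ (c / (1 + x^2/2)) * (x * c) := le_trans h1 h3
        _ = c^2 * x / (1 + x^2/2) := by ring
    have hR : x * ((1:ℝ)/4 - (c*x)^2) ≤ x * (Φ * (1 - Φ)) := by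
      apply mul_le_mul_of_nonneg_left _ hx
      have ht2 : (Φ - 1/2)^2 ≤ (c*x)^2 := by
        apply sq_le_sq'
        · nlinarith
        · calc Φ - 1/2 ≤ x * c := htc
            _ = c * x := by ring
      nlinarith
    have hmid : c^2 * x / (1 + x^2/2) ≤ x * ((1:ℝ)/4 - (c*x)^2) := by
      rw [div_le_iff₀ (by positivity)]
      have hx2 : x^2 ≤ (17/20)^2 := by nlinarith
      have hcp : c^2 * Real.pi = 1/2 := by
        rw [hc2]; field_simp
      have key : (1:ℝ) ≤ (Real.pi/2 - x^2) * (1 + x^2/2) := by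
        nlinarith [mul_nonneg (sub_nonneg.2 hpi.le) (sq_nonneg x), sq_nonneg x,
          mul_le_mul_of_nonneg_left hx2 (sq_nonneg x)]
      have h5 : c^2 * x * 1 ≤ c^2 * x * ((Real.pi/2 - x^2) * (1 + x^2/2)) :=
        mul_le_mul_of_nonneg_left key (by positivity)
      have h6 : c^2 * x * ((Real.pi/2 - x^2) * (1 + x^2/2))
          = x * ((1:ℝ)/4 - (c*x)^2) * (1 + x^2/2) := by
        linear_combination (x * (1 + x^2/2) / 2) * hcp
      linarith [h5, h6.symm.le]
    linarith
  · -- large x : Mills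
    have hm := mills x
    have hxpos : 0 < x := by linarith
    have hden : (0:ℝ) < x^2 + 1 := by positivity
    have hm' : x * φ ≤ (1 - Φ) * (x^2 + 1) := by
      rw [div_le_iff₀ hden] at hm; rw [hφ, hΦ]; exact hm
    have ht2 : Φ - 1/2 ≤ x^2/2 := by
      rcases le_or_gt x 1 with h1 | h1
      · have hcle : c ≤ 17/40 := by
          have hrel : c^2 * (2 * Real.pi) = 1 := by
            rw [hc2]; field_simp
          have hsq : c^2 ≤ (17/40)^2 := by
            nlinarith [hrel, mul_nonneg (sq_nonneg c) (sub_nonneg.2 hpi.le)]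
          have h9 := Real.sqrt_le_sqrt hsq
          rwa [Real.sqrt_sq hc0, Real.sqrt_sq (by norm_num : (0:ℝ) ≤ 17/40)] at h9
        calc Φ - 1/2 ≤ x * c := htc
          _ ≤ x * (x/2) := by
              apply mul_le_mul_of_nonneg_left _ hx
              calc c ≤ 17/40 := hcle
                _ ≤ x/2 := by linarith
          _ = x^2/2 := by ring
      · nlinarith [hΦ1]
    -- φ(Φ-1/2)(x²+1) ≤ x²φΦ ≤ xΦ(1-Φ)(x²+1)
    have key : φ * (Φ - 1/2) * (x^2+1) ≤ x * (Φ * (1 - Φ)) * (x^2+1) := by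
      have inner : (Φ - 1/2) * (x^2+1) ≤ x^2 * Φ := by nlinarith [ht2]
      have e3 : (x * Φ) * (x * φ) ≤ (x * Φ) * ((1 - Φ) * (x^2+1)) :=
        mul_le_mul_of_nonneg_left hm' (mul_nonneg hxpos.le hΦ0)
      calc φ * (Φ - 1/2) * (x^2+1) = φ * ((Φ - 1/2) * (x^2+1)) := by ring
        _ ≤ φ * (x^2 * Φ) := mul_le_mul_of_nonneg_left inner hφ0
        _ = (x * Φ) * (x * φ) := by ring
        _ ≤ (x * Φ) * ((1 - Φ) * (x^2+1)) := e3
        _ = x * (Φ * (1 - Φ)) * (x^2+1) := by ring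
    have := (mul_le_mul_iff_of_pos_right hden).mp key
    exact this

noncomputable def F (x : ℝ) : ℝ :=
  (stdGauss x + x * (stdCDF x - 1/2)) ^ 2 - x ^ 2 / 4

lemma hasDerivAt_F (x : ℝ) : HasDerivAt F
    (2 * (stdGauss x + x * (stdCDF x - 1/2)) * (stdCDF x - 1/2) - x / 2) x := by
  have hin : HasDerivAt (fun y => stdGauss y + y * (stdCDF y - 1/2)) (stdCDF x - 1/2) x := by
    have h1 : HasDerivAt (fun y : ℝ => y * (stdCDF y - 1/2))
        (1 * (stdCDF x - 1/2) + x * stdGauss x) x :=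
      (hasDerivAt_id x).mul ((hasDerivAt_stdCDF x).sub_const (1/2))
    have := (hasDerivAt_stdGauss x).add h1
    refine this.congr_deriv ?_
    ring
  have hsq := hin.pow 2
  have hq : HasDerivAt (fun y : ℝ => y ^ 2 / 4) (x / 2) x := by
    have := (hasDerivAt_pow 2 x).div_const 4
    refine this.congr_deriv ?_
    ring
  have := hsq.sub hq
  unfold F
  refine this.congr_deriv ?_
  ring

lemma F_le {x : ℝ} (hx : 0 ≤ x) : F x ≤ F 0 := by
  have hanti : AntitoneOn F (Set.Ici 0) := by
    apply antitoneOn_of_deriv_nonpos (convex_Ici 0)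
    · exact fun y _ => (hasDerivAt_F y).continuousAt.continuousWithinAt
    · intro y hy
      exact (hasDerivAt_F y).differentiableAt.differentiableWithinAt
    · intro y hy
      rw [interior_Ici] at hy
      rw [(hasDerivAt_F y).deriv]
      have hy0 : (0:ℝ) ≤ y := le_of_lt hy
      have hg := g_nonneg hy0
      -- 2(φ + y t) t - y/2 ≤ 0  where  φ t ≤ y(Φ(1-Φ)) = y(1/4 - t²)
      have hid : stdCDF y * (1 - stdCDF y) = 1/4 - (stdCDF y - 1/2)^2 := by ring
      nlinarith [hg, sq_nonneg (stdCDF y - 1/2)]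
  exact hanti (Set.self_mem_Ici) hx hx

/-- The contraction factor satisfies `C(x) ≤ 2/π` for all `x ≥ 0`, with equality at
`x = 0`: `C(0) = 4·φ(0)² = 2/π < 1`. -/
theorem contractionC_le_two_div_pi :
    (∀ x : ℝ, 0 ≤ x → contractionC x ≤ 2 / Real.pi) ∧
    contractionC 0 = 4 * stdGauss 0 ^ 2 ∧
    contractionC 0 = 2 / Real.pi ∧
    2 / Real.pi < 1 := by
  have hpi := Real.pi_pos
  have hC : ∀ x : ℝ, contractionC x = 4 * F x := by
    intro x; unfold contractionC F; ring
  have hF0 : F 0 = (2 * Real.pi)⁻¹ := by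
    unfold F
    rw [stdCDF_zero]
    rw [show stdGauss 0 + 0 * (1/2 - 1/2) = stdGauss 0 by ring]
    rw [stdGauss_zero_sq]; ring
  have h4 : (4:ℝ) * (2 * Real.pi)⁻¹ = 2 / Real.pi := by
    field_simp; ring
  refine ⟨fun x hx => ?_, ?_, ?_, ?_⟩
  · rw [hC x]
    calc 4 * F x ≤ 4 * F 0 := by linarith [F_le hx]
      _ = 2 / Real.pi := by rw [hF0, h4]
  · unfold contractionC
    rw [stdCDF_zero]; ring
  · rw [hC 0, hF0, h4]
  · rw [div_lt_one hpi]
    linarith [Real.pi_gt_three]
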